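/- Two t^ℕ-categories over a discrete valuation ring R are isomorphic as R-categories if and only if their underlying cyclic posets (object sets with structure cocycles) are isomorphic, where an isomorphism of cyclic posets (X,c) ≅ (X',c') is a bijection x ↦ x' with c(x,y,z) = c'(x',y',z') for all x,y,z. -/

import Mathlib

/-- Two `t^ℕ`-categories over a DVR `R` (each determined by its
object set and structure cocycle, with hom-sets free rank-one `R`-modules on
generators `f_{xy}` and composition `f_{yz} ∘ f_{xy} = t^{c(x,y,z)} f_{xz}`)
are isomorphic as `R`-categories if and only if their underlying cyclic posets
are isomorphic.  An `R`-category isomorphism is encoded by the bijection `φ`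
on objects and the units `r x y` with `f_{xy} ↦ (r x y)·f_{φx,φy}`, preserving
identities and composition. -/
theorem stmt_7 {R : Type*} [CommRing R] [IsDomain R] [IsDiscreteValuationRing R]
    (t : R) (ht : Irreducible t)
    {X X' : Type*} (c : X → X → X → ℕ) (c' : X' → X' → X' → ℕ)
    (hc : ∀ w x y z : X, c x y z + c w x z = c w x y + c w y z)
    (hc₁ : ∀ x y : X, c x x y = 0) (hc₂ : ∀ x y : X, c x y y = 0)
    (hc' : ∀ w x y z : X', c' x y z + c' w x z = c' w x y + c' w y z)
    (hc'₁ : ∀ x y : X', c' x x y = 0) (hc'₂ : ∀ x y : X', c' x y y = 0) :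
    (∃ (φ : X ≃ X') (r : X → X → Rˣ), (∀ x : X, r x x = 1) ∧
        ∀ x y z : X, (r y z : R) * (r x y : R) * t ^ c' (φ x) (φ y) (φ z) =
          (r x z : R) * t ^ c x y z) ↔
    (∃ φ : X ≃ X', ∀ x y z : X, c x y z = c' (φ x) (φ y) (φ z)) := by
  have ht0 : t ≠ 0 := ht.ne_zero
  have htu : ¬IsUnit t := ht.not_isUnit
  have key : ∀ (a b : ℕ) (u v : Rˣ), (u : R) * t ^ a = (v : R) * t ^ b → a = b := by
    intro a b u v h
    have hab : t ^ a ∣ t ^ b := by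
      have h1 : t ^ a ∣ (v : R) * t ^ b := ⟨(u : R), by rw [← h]; ring⟩
      exact (v.isUnit.dvd_mul_left).mp h1
    have hba : t ^ b ∣ t ^ a := by
      have h1 : t ^ b ∣ (u : R) * t ^ a := ⟨(v : R), by rw [h]; ring⟩
      exact (u.isUnit.dvd_mul_left).mp h1
    exact le_antisymm ((pow_dvd_pow_iff ht0 htu).mp hab)
      ((pow_dvd_pow_iff ht0 htu).mp hba)
  constructor
  · rintro ⟨φ, r, hr1, hr⟩
    refine ⟨φ, fun x y z => (key _ _ (r y z * r x y) (r x z) ?_).symm⟩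
    simpa using hr x y z
  · rintro ⟨φ, hφ⟩
    refine ⟨φ, fun _ _ => 1, fun _ => rfl, fun x y z => ?_⟩
    simp [hφ x y z]
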